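/- Let M_0 be the additive submonoid of the nonnegative rationals generated by the reciprocals of the prime numbers. Then the set of atoms of M_0 is exactly {1/p : p prime}, and M_0 is not a bounded factorization monoid because the set of factorization lengths of the element 1 contains every prime number. -/

import Mathlib

/-- `x` is invertible within the subset `S` of the ambient monoid. -/
def SUnit {A : Type*} [AddCommMonoid A] (S : Set A) (x : A) : Prop := ∃ y ∈ S, x + y = 0

/-- `a` is an atom of the subset (submonoid) `S`: it is non-invertible in `S` and
cannot be written as a sum of two non-invertible elements of `S`. -/
def SAtom {A : Type*} [AddCommMonoid A] (S : Set A) (a : A) : Prop :=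
  a ∈ S ∧ ¬ SUnit S a ∧ ∀ b ∈ S, ∀ c ∈ S, a = b + c → SUnit S b ∨ SUnit S c

/-- `x` is an atomic element of `S`: invertible in `S` or a finite sum of atoms of `S`. -/
def SAtomicElem {A : Type*} [AddCommMonoid A] (S : Set A) (x : A) : Prop :=
  SUnit S x ∨ ∃ l : Multiset A, (∀ a ∈ l, SAtom S a) ∧ l.sum = x

/-- The subset (submonoid) `S` is atomic. -/
def SAtomic {A : Type*} [AddCommMonoid A] (S : Set A) : Prop :=
  ∀ x ∈ S, SAtomicElem S x

namespace RecPrimesAux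

/-- The generating set. -/
def G : Set ℚ := {x : ℚ | ∃ p : ℕ, p.Prime ∧ x = 1 / p}

lemma one_div_pos {p : ℕ} (hp : p.Prime) : (0 : ℚ) < 1 / p := by
  have : (0 : ℚ) < p := by exact_mod_cast hp.pos
  positivity

lemma mem_G_pos {x : ℚ} (hx : x ∈ G) : 0 < x := by
  obtain ⟨p, hp, rfl⟩ := hx; exact one_div_pos hp

lemma den_one_div {p : ℕ} (hp : p.Prime) : ((1 : ℚ) / p).den = p := by
  rw [one_div, Rat.inv_natCast_den_of_pos hp.pos]

lemma closure_nonneg {x : ℚ} (hx : x ∈ AddSubmonoid.closure G) : 0 ≤ x := by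
  induction hx using AddSubmonoid.closure_induction with
  | mem y hy => exact (mem_G_pos hy).le
  | zero => exact le_refl 0
  | add a b _ _ ha hb => exact add_nonneg ha hb

lemma sunit_iff {x : ℚ} (hx : x ∈ AddSubmonoid.closure G) :
    SUnit (AddSubmonoid.closure G : Set ℚ) x ↔ x = 0 := by
  constructor
  · rintro ⟨y, hy, hxy⟩
    have h1 : 0 ≤ x := closure_nonneg hx
    have h2 : 0 ≤ y := closure_nonneg hy
    linarith
  · rintro rfl
    exact ⟨0, zero_mem _, add_zero 0⟩

/-- Key lemma: the only multiset of generators summing to `1/p` is `{1/p}`. -/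
lemma key {p : ℕ} (hp : p.Prime) (l : Multiset ℚ) (hl : ∀ y ∈ l, y ∈ G)
    (hs : l.sum = 1 / p) : l = {(1 : ℚ) / p} := by
  classical
  set m := l.filter (· = (1 : ℚ) / p) with hm
  set r := l.filter (fun y => ¬ y = (1 : ℚ) / p) with hr
  have hsplit : m + r = l := Multiset.filter_add_not _ l
  have hmrep : m = Multiset.replicate m.card ((1 : ℚ) / p) :=
    Multiset.eq_replicate_card.2 fun b hb => (Multiset.mem_filter.1 hb).2
  have hmsum : m.sum = (m.card : ℚ) * (1 / p) := by
    rw [hmrep, Multiset.sum_replicate, Multiset.card_replicate, nsmul_eq_mul]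
  have hrG : ∀ y ∈ r, y ∈ G ∧ y ≠ (1 : ℚ) / p := fun y hy =>
    ⟨hl y (Multiset.mem_of_mem_filter hy), (Multiset.mem_filter.1 hy).2⟩
  -- p does not divide the denominator of r.sum
  have hden : ¬ (p ∣ r.sum.den) := by
    clear_value r
    clear hsplit hr
    induction r using Multiset.induction with
    | empty => simpa using hp.one_lt.ne'
    | cons a s ih =>
      have hsd : ¬ p ∣ s.sum.den := ih fun y hy => hrG y (Multiset.mem_cons_of_mem hy)
      obtain ⟨⟨q, hq, rfl⟩, hne⟩ := hrG a (Multiset.mem_cons_self a s)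
      have hqp : q ≠ p := fun h => hne (by rw [h])
      have had : ((1 : ℚ) / q).den = q := den_one_div hq
      have hdvd : ((1 : ℚ) / q + s.sum).den ∣ ((1 : ℚ) / q).den * s.sum.den :=
        Rat.add_den_dvd _ _
      rw [Multiset.sum_cons]
      intro hpd
      have : p ∣ ((1 : ℚ) / q).den * s.sum.den := hpd.trans hdvd
      rcases (Nat.Prime.dvd_mul hp).1 this with h | h
      · rw [had] at h
        exact hqp ((Nat.prime_dvd_prime_iff_eq hp hq).1 h).symm
      · exact hsd h
  have hrpos : ∀ y ∈ r, (0 : ℚ) < y := fun y hy => mem_G_pos (hrG y hy).1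
  have hsum : (m.card : ℚ) * (1 / p) + r.sum = 1 / p := by
    rw [← hmsum, ← Multiset.sum_add, hsplit, hs]
  have hrnonneg : 0 ≤ r.sum := Multiset.sum_nonneg fun y hy => (hrpos y hy).le
  have hppos := one_div_pos hp
  -- m.card must be 1
  have hcard : m.card = 1 := by
    rcases Nat.lt_or_ge m.card 2 with h2 | h2
    · interval_cases h : m.card
      · exfalso
        rw [Nat.cast_zero, zero_mul, zero_add] at hsum
        rw [hsum, den_one_div hp] at hden
        exact hden dvd_rfl
      · rfl
    · exfalso
      have : (2 : ℚ) ≤ (m.card : ℚ) := by exact_mod_cast h2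
      nlinarith
  have hrzero : r = 0 := by
    have hrs : r.sum = 0 := by
      rw [hcard, Nat.cast_one, one_mul] at hsum; linarith
    by_contra h
    obtain ⟨a, ha⟩ := Multiset.exists_mem_of_ne_zero h
    have := Multiset.single_le_sum (fun y hy => (hrpos y hy).le) a ha
    have := hrpos a ha
    linarith
  rw [← hsplit, hrzero, hmrep, hcard, add_zero]
  rfl

lemma atoms_eq :
    {a : ℚ | SAtom (AddSubmonoid.closure G : Set ℚ) a} = G := by
  ext a
  simp only [Set.mem_setOf_eq]
  constructor
  · rintro ⟨haS, hanu, hdec⟩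
    have hane : a ≠ 0 := fun h => hanu ((sunit_iff haS).2 h)
    obtain ⟨l, hlG, hls⟩ := AddSubmonoid.exists_multiset_of_mem_closure haS
    rcases Multiset.empty_or_exists_mem l with rfl | ⟨b, hb⟩
    · exact absurd hls.symm (by simpa using hane)
    · obtain ⟨t, rfl⟩ := Multiset.exists_cons_of_mem hb
      have hbG := hlG b hb
      have hbS : b ∈ AddSubmonoid.closure G := AddSubmonoid.subset_closure hbG
      have htS : t.sum ∈ AddSubmonoid.closure G :=
        AddSubmonoid.multiset_sum_mem _ t fun y hy =>
          AddSubmonoid.subset_closure (hlG y (Multiset.mem_cons_of_mem hy))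
      have ha : a = b + t.sum := by rw [← hls, Multiset.sum_cons]
      rcases hdec b hbS t.sum htS ha with h | h
      · exact absurd ((sunit_iff hbS).1 h) (mem_G_pos hbG).ne'
      · rw [ha, (sunit_iff htS).1 h, add_zero]; exact hbG
  · rintro haG
    obtain ⟨p, hp, rfl⟩ := haG
    refine ⟨AddSubmonoid.subset_closure ⟨p, hp, rfl⟩, ?_, ?_⟩
    · intro h
      exact (one_div_pos hp).ne' ((sunit_iff (AddSubmonoid.subset_closure ⟨p, hp, rfl⟩)).1 h)
    · intro b hbS c hcS habc
      by_contra hcon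
      push_neg at hcon
      obtain ⟨hbu, hcu⟩ := hcon
      have hbne : b ≠ 0 := fun h => hbu ((sunit_iff hbS).2 h)
      have hcne : c ≠ 0 := fun h => hcu ((sunit_iff hcS).2 h)
      obtain ⟨lb, hlbG, hlbs⟩ := AddSubmonoid.exists_multiset_of_mem_closure hbS
      obtain ⟨lc, hlcG, hlcs⟩ := AddSubmonoid.exists_multiset_of_mem_closure hcS
      have hlb0 : lb ≠ 0 := by rintro rfl; exact hbne (by simpa using hlbs.symm)
      have hlc0 : lc ≠ 0 := by rintro rfl; exact hcne (by simpa using hlcs.symm)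
      have hsum : (lb + lc).sum = 1 / p := by
        rw [Multiset.sum_add, hlbs, hlcs, habc]
      have := key hp (lb + lc) (fun y hy => by
        rcases Multiset.mem_add.1 hy with h | h
        · exact hlbG y h
        · exact hlcG y h) hsum
      have hcard : (lb + lc).card = 1 := by rw [this]; rfl
      rw [Multiset.card_add] at hcard
      have h1 : lb.card ≠ 0 := fun h => hlb0 (Multiset.card_eq_zero.1 h)
      have h2 : lc.card ≠ 0 := fun h => hlc0 (Multiset.card_eq_zero.1 h)
      omega

lemma len_of_prime {p : ℕ} (hp : p.Prime) :
    ∃ l : Multiset ℚ,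
      (∀ a ∈ l, SAtom (AddSubmonoid.closure G : Set ℚ) a) ∧ l.sum = 1 ∧ l.card = p := by
  refine ⟨Multiset.replicate p ((1 : ℚ) / p), ?_, ?_, Multiset.card_replicate _ _⟩
  · intro a ha
    rw [Multiset.eq_of_mem_replicate ha]
    have : (1 : ℚ) / p ∈ G := ⟨p, hp, rfl⟩
    rw [← Set.mem_setOf_eq (p := fun a => SAtom _ a), atoms_eq]
    exact this
  · rw [Multiset.sum_replicate, nsmul_eq_mul, mul_one_div, div_self]
    exact_mod_cast hp.pos.ne'

end RecPrimesAux

/-- The Puiseux monoid `M₀ = ⟨1/p : p prime⟩` has set of atoms `{1/p : p prime}`,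
every prime `p` is a factorization length of the element `1`, and consequently
`M₀` is not a bounded factorization monoid. -/
theorem reciprocals_of_primes_not_bf :
    {a : ℚ | SAtom (AddSubmonoid.closure {x : ℚ | ∃ p : ℕ, p.Prime ∧ x = 1 / p} : Set ℚ) a}
      = {x : ℚ | ∃ p : ℕ, p.Prime ∧ x = 1 / p} ∧
    (∀ p : ℕ, p.Prime → ∃ l : Multiset ℚ,
      (∀ a ∈ l, SAtom
        (AddSubmonoid.closure {x : ℚ | ∃ p : ℕ, p.Prime ∧ x = 1 / p} : Set ℚ) a) ∧
      l.sum = 1 ∧ l.card = p) ∧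
    ¬ Set.Finite {n : ℕ | ∃ l : Multiset ℚ,
      (∀ a ∈ l, SAtom
        (AddSubmonoid.closure {x : ℚ | ∃ p : ℕ, p.Prime ∧ x = 1 / p} : Set ℚ) a) ∧
      l.sum = 1 ∧ l.card = n} := by
  refine ⟨RecPrimesAux.atoms_eq, fun p hp => RecPrimesAux.len_of_prime hp, ?_⟩
  intro hfin
  have hsub : {n : ℕ | n.Prime} ⊆ {n : ℕ | ∃ l : Multiset ℚ,
      (∀ a ∈ l, SAtom
        (AddSubmonoid.closure {x : ℚ | ∃ p : ℕ, p.Prime ∧ x = 1 / p} : Set ℚ) a) ∧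
      l.sum = 1 ∧ l.card = n} := fun n hn => RecPrimesAux.len_of_prime hn
  exact Nat.infinite_setOf_prime (hfin.subset hsub)
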